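/- arXiv:2502.07792 — 2 statements merged into one kernel-verified Lean document; each statement's English description precedes it below -/
import Mathlib

section
/- Let τ₁ ∈ ℝ. Then the conditional expectation of the quality t of an applicant selected by the agent satisfies the closed form E[t | s̃ ≥ τ₁] = ((1−α)·σ_s²/σ_s̃)·H(τ₁/σ_s̃). -/
open MeasureTheory ProbabilityTheory Real

/-- Standard normal density. -/
noncomputable def stdPdf (x : ℝ) : ℝ := (Real.sqrt (2 * Real.pi))⁻¹ * Real.exp (-(x ^ 2) / 2)

/-- Standard normal CDF. -/
noncomputable def stdCdf (x : ℝ) : ℝ := ∫ u in Set.Iic x, stdPdf u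

/-- Standard normal complementary CDF. -/
noncomputable def stdCcdf (x : ℝ) : ℝ := 1 - stdCdf x

/-- Standard normal hazard rate. -/
noncomputable def hazard (x : ℝ) : ℝ := stdPdf x / stdCcdf x

/-- Conditional expectation of `X` given the event `A`: `E[X·1_A]/P(A)`. -/
noncomputable def condMean {Ω : Type*} [MeasurableSpace Ω] (μ : Measure Ω)
    (X : Ω → ℝ) (A : Set Ω) : ℝ :=
  (∫ ω in A, X ω ∂μ) / (μ A).toReal

open Set Filter
open scoped NNReal ENNReal

noncomputable def gpdf (c x : ℝ) : ℝ := (Real.sqrt (2 * Real.pi * c))⁻¹ * Real.exp (-x ^ 2 / (2 * c))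

lemma gpdf_nonneg (c x : ℝ) : 0 ≤ gpdf c x := by
  unfold gpdf; positivity

lemma continuous_gpdf (c : ℝ) : Continuous (gpdf c) := by
  unfold gpdf; fun_prop

@[fun_prop] lemma measurable_gpdf (c : ℝ) : Measurable (gpdf c) := (continuous_gpdf c).measurable

lemma gpdf_exp (c x : ℝ) : gpdf c x = (Real.sqrt (2 * Real.pi * c))⁻¹ * Real.exp (-(2*c)⁻¹ * x ^ 2) := by
  rw [gpdf]; ring_nf

lemma gpdf_eq (c : ℝ) (hc : 0 < c) :
    gaussianPDFReal 0 c.toNNReal = gpdf c := by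
  ext x
  rw [gaussianPDFReal, gpdf, Real.coe_toNNReal c hc.le]
  ring_nf

lemma toNNReal_ne (c : ℝ) (hc : 0 < c) : (c.toNNReal : ℝ≥0) ≠ 0 :=
  ne_of_gt (Real.toNNReal_pos.mpr hc)

lemma integrable_gpdf (c : ℝ) (hc : 0 < c) : Integrable (gpdf c) := by
  have h := (integrable_exp_neg_mul_sq (b := (2*c)⁻¹) (by positivity)).const_mul
    (Real.sqrt (2 * Real.pi * c))⁻¹
  exact h.congr (Filter.Eventually.of_forall fun x => (gpdf_exp c x).symm)

lemma integrable_mul_gpdf (c : ℝ) (hc : 0 < c) : Integrable (fun x => x * gpdf c x) := by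
  have h : Integrable (fun x : ℝ => x * Real.exp (-(2*c)⁻¹ * x ^ 2)) := by
    simpa using integrable_mul_exp_neg_mul_sq (b := (2*c)⁻¹) (by positivity)
  have := (h.const_mul (Real.sqrt (2 * Real.pi * c))⁻¹)
  refine this.congr (Filter.Eventually.of_forall fun x => ?_)
  simp only [gpdf_exp c x]; ring

lemma integral_gpdf (c : ℝ) (hc : 0 < c) : ∫ x, gpdf c x = 1 := by
  rw [← gpdf_eq c hc]
  exact integral_gaussianPDFReal_eq_one 0 (toNNReal_ne c hc)

lemma integral_gaussianReal (c : ℝ) (hc : 0 < c) (h : ℝ → ℝ) :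
    ∫ x, h x ∂(gaussianReal 0 c.toNNReal) = ∫ x, gpdf c x * h x := by
  rw [gaussianReal_of_var_ne_zero 0 (toNNReal_ne c hc)]
  have hd : gaussianPDF 0 c.toNNReal = fun x => ((Real.toNNReal (gpdf c x) : ℝ≥0) : ℝ≥0∞) := by
    ext x
    rw [gaussianPDF, gpdf_eq c hc, ENNReal.ofReal]
  have hm : Measurable (fun x => Real.toNNReal (gpdf c x)) := by
    refine Measurable.real_toNNReal ?_
    have := measurable_gaussianPDFReal 0 c.toNNReal
    rwa [gpdf_eq c hc] at this
  rw [hd, integral_withDensity_eq_integral_smul hm]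
  congr 1; ext x
  rw [NNReal.smul_def, Real.coe_toNNReal _ (by unfold gpdf; positivity), smul_eq_mul]

lemma gpdf_scale (c x : ℝ) (hc : 0 < c) : gpdf c x = (Real.sqrt c)⁻¹ * stdPdf (x / Real.sqrt c) := by
  have h1 : Real.sqrt (2*Real.pi*c) = Real.sqrt (2*Real.pi) * Real.sqrt c :=
    Real.sqrt_mul (by positivity) c
  rw [gpdf, stdPdf, div_pow, Real.sq_sqrt hc.le, h1, mul_inv]
  ring_nf

lemma gpdf_one : gpdf 1 = stdPdf := by
  ext x; rw [gpdf, stdPdf]; norm_num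

lemma integrable_stdPdf : Integrable stdPdf := gpdf_one ▸ integrable_gpdf 1 one_pos

lemma stdCcdf_eq (x : ℝ) : stdCcdf x = ∫ u in Set.Ici x, stdPdf u := by
  have h := intervalIntegral.integral_Iic_add_Ioi (b := x) (f := stdPdf) (μ := volume)
    integrable_stdPdf.integrableOn integrable_stdPdf.integrableOn
  have htot : ∫ x, stdPdf x = 1 := by rw [← gpdf_one]; exact integral_gpdf 1 one_pos
  rw [htot] at h
  rw [stdCcdf, stdCdf, integral_Ici_eq_integral_Ioi]
  linarith

lemma stdPdf_pos (x : ℝ) : 0 < stdPdf x := by rw [stdPdf]; positivity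

lemma stdCcdf_pos (x : ℝ) : 0 < stdCcdf x := by
  rw [stdCcdf_eq]
  have : (0:ℝ) < ∫ u in Set.Ioi x, stdPdf u := by
    apply setIntegral_pos_iff_support_of_nonneg_ae ?_ ?_ |>.mpr ?_
    · exact Filter.Eventually.of_forall fun u => (stdPdf_pos u).le
    · exact integrable_stdPdf.integrableOn
    · have : (Function.support stdPdf) = Set.univ := by
        ext u; simp [Function.support, (stdPdf_pos u).ne']
      rw [this]
      simpa using measure_Ioi_pos.mpr (by simp)
  rwa [integral_Ici_eq_integral_Ioi]

lemma integral_Ici_gpdf (c r : ℝ) (hc : 0 < c) :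
    ∫ x in Set.Ici r, gpdf c x = stdCcdf (r / Real.sqrt c) := by
  have hs : 0 < Real.sqrt c := Real.sqrt_pos.mpr hc
  have h0 : ∀ x, gpdf c x = (Real.sqrt c)⁻¹ * stdPdf ((Real.sqrt c)⁻¹ * x) := by
    intro x; rw [gpdf_scale c x hc, div_eq_inv_mul]
  simp_rw [h0]
  rw [integral_Ici_eq_integral_Ioi, integral_const_mul,
    integral_comp_mul_left_Ioi (fun x => stdPdf x) r (inv_pos.mpr hs),
    smul_eq_mul, ← mul_assoc, inv_inv]
  rw [inv_mul_cancel₀ hs.ne', one_mul, stdCcdf_eq, integral_Ici_eq_integral_Ioi,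
    inv_mul_eq_div]

lemma tail_gpdf (c r : ℝ) (hc : 0 < c) :
    ∫ x in Set.Ici r, x * gpdf c x = c * gpdf c r := by
  have hderiv : ∀ x ∈ Set.Ioi r, HasDerivAt (fun x => -c * gpdf c x) (x * gpdf c x) x := by
    intro x _
    have h1 : HasDerivAt (fun x : ℝ => -x ^ 2 / (2 * c)) (-x / c) x := by
      have : HasDerivAt (fun x : ℝ => -x ^ 2 / (2 * c)) (-(2 * x ^ 1) / (2 * c)) x := by
        simpa using ((hasDerivAt_pow 2 x).neg.div_const (2 * c))
      convert this using 1
      field_simp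
    have h2 := (Real.hasDerivAt_exp (-x ^ 2 / (2 * c))).comp x h1
    have h3 : HasDerivAt (fun y => -c * gpdf c y)
        (-c * ((Real.sqrt (2 * Real.pi * c))⁻¹ * (Real.exp (-x ^ 2 / (2 * c)) * (-x / c)))) x := by
      simp only [gpdf]
      exact ((h2.const_mul (Real.sqrt (2 * Real.pi * c))⁻¹).const_mul (-c)).congr_deriv (by ring)
    convert h3 using 1
    rw [gpdf]; field_simp
  have htend : Tendsto (fun x => -c * gpdf c x) atTop (nhds 0) := by
    have h1 : Tendsto (fun x : ℝ => -x ^ 2 / (2 * c)) atTop atBot := by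
      apply Filter.Tendsto.atBot_div_const (by positivity)
      exact tendsto_neg_atBot_iff.mpr (tendsto_pow_atTop (by norm_num))
    have h2 := Real.tendsto_exp_atBot.comp h1
    have := (h2.const_mul ((Real.sqrt (2 * Real.pi * c))⁻¹)).const_mul (-c)
    simpa [gpdf, Function.comp, mul_comm] using this
  have hint : IntegrableOn (fun x => x * gpdf c x) (Set.Ioi r) :=
    (integrable_mul_gpdf c hc).integrableOn
  have key := integral_Ioi_of_hasDerivAt_of_tendsto
    ((continuous_const.mul (continuous_gpdf c)).continuousWithinAt) hderiv hint htend
  rw [integral_Ici_eq_integral_Ioi, key]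
  simp

lemma mean_gpdf (c : ℝ) : ∫ x, x * gpdf c x = 0 := by
  have h : ∫ x, -x * gpdf c (-x) = ∫ x, x * gpdf c x := by
    exact integral_neg_eq_self (fun x => x * gpdf c x) volume
  have heq : ∀ x : ℝ, -x * gpdf c (-x) = -(x * gpdf c x) := by
    intro x; rw [gpdf, gpdf]; ring_nf
  simp_rw [heq, integral_neg] at h
  linarith

lemma conv_gpdf (a b t : ℝ) (ha : 0 < a) (hb : 0 < b) :
    ∫ y, gpdf a (t - y) * gpdf b y = gpdf (a + b) t := by
  set v := a + b with hv
  have hvpos : 0 < v := by positivity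
  set β := v / (2 * a * b) with hβ
  have hβpos : 0 < β := by positivity
  set m := b * t / v with hm
  have key : ∀ y, gpdf a (t - y) * gpdf b y
      = (gpdf v t * Real.sqrt (β / Real.pi)) * Real.exp (-β * (y - m) ^ 2) := by
    intro y
    simp only [gpdf]
    rw [show ((Real.sqrt (2 * Real.pi * a))⁻¹ * Real.exp (-(t - y) ^ 2 / (2 * a))) *
        ((Real.sqrt (2 * Real.pi * b))⁻¹ * Real.exp (-y ^ 2 / (2 * b)))
        = ((Real.sqrt (2 * Real.pi * a))⁻¹ * (Real.sqrt (2 * Real.pi * b))⁻¹) *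
          (Real.exp (-(t - y) ^ 2 / (2 * a)) * Real.exp (-y ^ 2 / (2 * b))) by ring,
      ← Real.exp_add]
    rw [show ((Real.sqrt (2 * Real.pi * v))⁻¹ * Real.exp (-t ^ 2 / (2 * v)) *
        Real.sqrt (β / Real.pi)) * Real.exp (-β * (y - m) ^ 2)
        = ((Real.sqrt (2 * Real.pi * v))⁻¹ * Real.sqrt (β / Real.pi)) *
          (Real.exp (-t ^ 2 / (2 * v)) * Real.exp (-β * (y - m) ^ 2)) by ring,
      ← Real.exp_add]
    congr 1
    · rw [← Real.sqrt_inv, ← Real.sqrt_inv, ← Real.sqrt_mul (by positivity),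
        ← Real.sqrt_inv, ← Real.sqrt_mul (by positivity)]
      congr 1
      rw [hβ, hv]
      have hπ := Real.pi_pos
      field_simp
    · rw [hβ, hm, hv]
      have hπ := Real.pi_pos
      congr 1
      field_simp
      ring
  simp_rw [key]
  rw [integral_const_mul]
  have h1 : ∫ y : ℝ, Real.exp (-β * (y - m) ^ 2)
      = ∫ y : ℝ, Real.exp (-β * y ^ 2) :=
    integral_sub_right_eq_self (fun y => Real.exp (-β * y ^ 2)) m
  rw [h1, integral_gaussian]
  rw [mul_assoc, ← Real.sqrt_mul (by positivity), show β / Real.pi * (Real.pi / β)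
      = 1 by field_simp]
  simp

lemma gpdf_le (c x : ℝ) (hc : 0 < c) : gpdf c x ≤ (Real.sqrt (2 * Real.pi * c))⁻¹ := by
  rw [gpdf]
  have h1 : Real.exp (-x ^ 2 / (2 * c)) ≤ 1 := by
    rw [show (1:ℝ) = Real.exp 0 by simp]
    apply Real.exp_le_exp.mpr
    apply div_nonpos_of_nonpos_of_nonneg (neg_nonpos.mpr (sq_nonneg x)) (by positivity)
  calc (Real.sqrt (2 * Real.pi * c))⁻¹ * Real.exp (-x ^ 2 / (2 * c))
      ≤ (Real.sqrt (2 * Real.pi * c))⁻¹ * 1 := by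
        apply mul_le_mul_of_nonneg_left h1 (by positivity)
    _ = _ := mul_one _

lemma integral_Ici_shift (g : ℝ → ℝ) (t y : ℝ) :
    ∫ x in Set.Ici (t - y), g x = ∫ u in Set.Ici t, g (u - y) := by
  have h1 : ∫ x in Set.Ici (t - y), g x = ∫ x, (Set.Ici t).indicator (fun u => g (u - y)) (x + y) := by
    rw [← integral_indicator measurableSet_Ici]
    congr 1; ext x
    simp only [Set.indicator_apply, Set.mem_Ici]
    by_cases hx : t - y ≤ x
    · rw [if_pos hx, if_pos (sub_le_iff_le_add.mp hx)]
      simp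
    · rw [if_neg hx, if_neg (fun h => hx (sub_le_iff_le_add.mpr h))]
  rw [h1, integral_add_right_eq_self, integral_indicator measurableSet_Ici]

lemma ccdf_conv (a b t : ℝ) (ha : 0 < a) (hb : 0 ≤ b) :
    ∫ y, (∫ x in Set.Ici (t - y), gpdf a x) ∂(gaussianReal 0 b.toNNReal)
      = ∫ u in Set.Ici t, gpdf (a + b) u := by
  rcases eq_or_lt_of_le hb with hb0 | hbpos
  · rw [← hb0]
    simp only [Real.toNNReal_zero, gaussianReal_zero_var, integral_dirac, sub_zero, add_zero]
  · rw [integral_gaussianReal b hbpos]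
    have hCmeas : Measurable (fun y => ∫ x in Set.Ici (t - y), gpdf a x) := by
      have hanti : Monotone (fun y => ∫ x in Set.Ici (t - y), gpdf a x) := by
        intro y₁ y₂ h12
        apply setIntegral_mono_set (integrable_gpdf a ha).integrableOn
          (Filter.Eventually.of_forall fun x => gpdf_nonneg a x)
        apply HasSubset.Subset.eventuallyLE
        exact Set.Ici_subset_Ici.mpr (by linarith)
      exact hanti.measurable
    rw [integral_eq_lintegral_of_nonneg_ae]
    rotate_left
    · exact Filter.Eventually.of_forall fun y => mul_nonneg (gpdf_nonneg b y)
        (setIntegral_nonneg measurableSet_Ici fun x _ => gpdf_nonneg a x)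
    · exact ((continuous_gpdf b).measurable.mul hCmeas).aestronglyMeasurable
    have key : ∀ y : ℝ, ENNReal.ofReal (gpdf b y * ∫ x in Set.Ici (t - y), gpdf a x)
        = ∫⁻ u in Set.Ici t, ENNReal.ofReal (gpdf b y) * ENNReal.ofReal (gpdf a (u - y)) := by
      intro y
      rw [ENNReal.ofReal_mul (gpdf_nonneg b y), integral_Ici_shift (gpdf a) t y,
        ofReal_integral_eq_lintegral_ofReal
          (((integrable_gpdf a ha).comp_sub_right y).integrableOn)
          (Filter.Eventually.of_forall fun u => gpdf_nonneg a _),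
        ← lintegral_const_mul _ (by fun_prop)]
    simp_rw [key]
    rw [lintegral_lintegral_swap (by fun_prop)]
    have inner : ∀ u : ℝ, (∫⁻ y, ENNReal.ofReal (gpdf b y) * ENNReal.ofReal (gpdf a (u - y)))
        = ENNReal.ofReal (gpdf (a + b) u) := by
      intro u
      have hint : Integrable (fun y => gpdf b y * gpdf a (u - y)) := by
        apply Integrable.mono' ((integrable_gpdf b hbpos).const_mul (Real.sqrt (2 * Real.pi * a))⁻¹)
          (Measurable.aestronglyMeasurable (by fun_prop))
        refine Filter.Eventually.of_forall fun y => ?_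
        rw [Real.norm_eq_abs, abs_of_nonneg (mul_nonneg (gpdf_nonneg b y) (gpdf_nonneg a _)),
          mul_comm ((Real.sqrt (2 * Real.pi * a))⁻¹)]
        exact mul_le_mul_of_nonneg_left (gpdf_le a (u - y) ha) (gpdf_nonneg b y)
      simp_rw [← ENNReal.ofReal_mul (gpdf_nonneg b _)]
      rw [← ofReal_integral_eq_lintegral_ofReal hint (Filter.Eventually.of_forall fun y =>
          mul_nonneg (gpdf_nonneg b y) (gpdf_nonneg a _))]
      congr 1
      rw [← conv_gpdf a b u ha hbpos]
      congr 1; ext y; ring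
    simp_rw [inner]
    rw [← ofReal_integral_eq_lintegral_ofReal (integrable_gpdf (a+b) (by positivity)).integrableOn
        (Filter.Eventually.of_forall fun u => gpdf_nonneg _ _),
      ENNReal.toReal_ofReal (setIntegral_nonneg measurableSet_Ici fun u _ => gpdf_nonneg _ _)]

lemma conv_gaussianReal (a b t : ℝ) (ha : 0 < a) (hb : 0 ≤ b) :
    ∫ y, gpdf a (t - y) ∂(gaussianReal 0 b.toNNReal) = gpdf (a + b) t := by
  rcases eq_or_lt_of_le hb with hb0 | hbpos
  · rw [← hb0]
    simp only [Real.toNNReal_zero, gaussianReal_zero_var, integral_dirac, sub_zero, add_zero]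
  · rw [integral_gaussianReal b hbpos, ← conv_gpdf a b t ha hbpos]
    congr 1; ext y; ring

lemma integrable_id_gaussianReal (c : ℝ) (hc : 0 < c) :
    Integrable (fun x => x) (gaussianReal 0 c.toNNReal) := by
  rw [gaussianReal_of_var_ne_zero 0 (ne_of_gt (Real.toNNReal_pos.mpr hc))]
  have hd : gaussianPDF 0 c.toNNReal = fun x => ((Real.toNNReal (gpdf c x) : ℝ≥0) : ℝ≥0∞) := by
    ext x
    rw [gaussianPDF, gpdf_eq c hc, ENNReal.ofReal]
  have hm : Measurable (fun x => Real.toNNReal (gpdf c x)) := by fun_prop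
  rw [hd, integrable_withDensity_iff_integrable_smul hm]
  refine (integrable_mul_gpdf c hc).congr (Filter.Eventually.of_forall fun x => ?_)
  simp only [NNReal.smul_def, Real.coe_toNNReal _ (gpdf_nonneg c x), smul_eq_mul, mul_comm]

lemma mean_gaussianReal (c : ℝ) (hc : 0 < c) :
    ∫ x, x ∂(gaussianReal 0 c.toNNReal) = 0 := by
  rw [integral_gaussianReal c hc]
  rw [← mean_gpdf c]
  congr 1; ext x; ring

/-- When the selection process is delegated to the agent with threshold `τ₁`, the expected
quality `t = α·f + (1-α)·s` of a selected applicant (conditional on `s̃ = s + ε_s ≥ τ₁`)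
equals `((1-α)·σ_s²/σ_s̃)·H(τ₁/σ_s̃)`. -/
theorem delegated_expected_quality
    {Ω : Type*} [MeasurableSpace Ω] (μ : Measure Ω) [IsProbabilityMeasure μ]
    (f s e : Ω → ℝ) (hf : Measurable f) (hs : Measurable s) (he : Measurable e)
    (σf σs σe α τ₁ : ℝ) (hσf : 0 < σf) (hσs : 0 < σs) (hσe : 0 ≤ σe)
    (hα : α ∈ Set.Icc (0 : ℝ) 1)
    (hindep : iIndepFun ![f, s, e] μ)
    (hfd : μ.map f = gaussianReal 0 ((σf ^ 2).toNNReal))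
    (hsd : μ.map s = gaussianReal 0 ((σs ^ 2).toNNReal))
    (hed : μ.map e = gaussianReal 0 ((σe ^ 2).toNNReal)) :
    condMean μ (fun ω => α * f ω + (1 - α) * s ω) {ω | τ₁ ≤ s ω + e ω}
      = ((1 - α) * σs ^ 2 / Real.sqrt (σs ^ 2 + σe ^ 2))
        * hazard (τ₁ / Real.sqrt (σs ^ 2 + σe ^ 2)) := by
  have hmeas : ∀ i, Measurable (![f, s, e] i) := by
    intro i; fin_cases i <;> simpa
  set a : ℝ := σs ^ 2 with ha_def
  set b : ℝ := σe ^ 2 with hb_def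
  have ha : 0 < a := by positivity
  have hb : 0 ≤ b := by positivity
  have hv : 0 < a + b := by positivity
  set γs := gaussianReal 0 a.toNNReal with hγs
  set γe := gaussianReal 0 b.toNNReal with hγe
  set B : Set (ℝ × ℝ) := {p | τ₁ ≤ p.1 + p.2} with hB_def
  have hB : MeasurableSet B := measurableSet_le measurable_const (measurable_fst.add measurable_snd)
  set A : Set Ω := {ω | τ₁ ≤ s ω + e ω} with hA_def
  have hA : MeasurableSet A := measurableSet_le measurable_const (hs.add he)
  have hpre : A = (fun ω => (s ω, e ω)) ⁻¹' B := rfl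
  -- independence of s and e, map of the pair
  have hse : IndepFun s e μ := hindep.indepFun (i := 1) (j := 2) (by decide)
  have hmap : μ.map (fun ω => (s ω, e ω)) = γs.prod γe := by
    rw [← hsd, ← hed]
    exact (indepFun_iff_map_prod_eq_prod_map_map hs.aemeasurable he.aemeasurable).mp hse
  -- independence of f and the pair (s, e)
  have hfp : IndepFun f (fun ω => (s ω, e ω)) μ :=
    (hindep.indepFun_prodMk hmeas 1 2 0 (by decide) (by decide)).symm
  -- the indicator variable
  set Y : Ω → ℝ := fun ω => B.indicator (fun _ => (1:ℝ)) (s ω, e ω) with hY_def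
  have hYmeas : Measurable Y := (measurable_const.indicator hB).comp (hs.prodMk he)
  have hfY : IndepFun f Y μ := hfp.comp measurable_id (measurable_const.indicator hB)
  have hYint : Integrable Y μ := by
    refine Integrable.mono' (integrable_const 1) hYmeas.aestronglyMeasurable ?_
    refine Filter.Eventually.of_forall fun ω => ?_
    rw [hY_def, Real.norm_eq_abs]
    exact abs_le.mpr ⟨by apply le_trans (by norm_num) (Set.indicator_nonneg (by norm_num) _) , Set.indicator_le_self' (by norm_num) _ |>.trans (by norm_num)⟩
  -- integrability of f and s
  have hfint : Integrable f μ := by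
    have h1 : Integrable (fun x => x) (μ.map f) := by
      rw [hfd]; exact integrable_id_gaussianReal _ (by positivity)
    exact (integrable_map_measure aestronglyMeasurable_id hf.aemeasurable).mp h1
  have hsint : Integrable s μ := by
    have h1 : Integrable (fun x => x) (μ.map s) := by
      rw [hsd]; exact integrable_id_gaussianReal _ ha
    exact (integrable_map_measure aestronglyMeasurable_id hs.aemeasurable).mp h1
  -- E f = 0
  have hEf : ∫ ω, f ω ∂μ = 0 := by
    have h1 := integral_map (μ := μ) (f := fun x : ℝ => x) hf.aemeasurable
      measurable_id.aestronglyMeasurable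
    rw [hfd] at h1
    rw [← h1]
    exact mean_gaussianReal _ (by positivity)
  -- numerator for f
  have hNf : ∫ ω in A, f ω ∂μ = 0 := by
    have h1 : ∫ ω in A, f ω ∂μ = ∫ ω, f ω * Y ω ∂μ := by
      rw [← integral_indicator hA]
      congr 1; ext ω
      by_cases hω : ω ∈ A
      · simp only [Set.indicator_of_mem hω, Y,
          Set.indicator_of_mem (show (s ω, e ω) ∈ B from hω), mul_one]
      · simp only [Set.indicator_of_notMem hω, Y,
          Set.indicator_of_notMem (show (s ω, e ω) ∉ B from hω), mul_zero]
    have h5 := hfY.integral_mul_eq_mul_integral hfint.aestronglyMeasurable hYint.aestronglyMeasurable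
    have h6 : integral μ (f * Y) = ∫ ω, f ω * Y ω ∂μ := rfl
    rw [h1, ← h6, h5, hEf, zero_mul]
  -- numerator for s
  have hNs : ∫ ω in A, s ω ∂μ = a * gpdf (a + b) τ₁ := by
    have h1 : ∫ ω in A, s ω ∂μ = ∫ p, B.indicator (fun p : ℝ × ℝ => p.1) p ∂(γs.prod γe) := by
      rw [← hmap, integral_map (hs.prodMk he).aemeasurable
        (measurable_fst.indicator hB).aestronglyMeasurable, ← integral_indicator hA]
      congr 1
    have hint : Integrable (fun p : ℝ × ℝ => B.indicator (fun p : ℝ × ℝ => p.1) p) (γs.prod γe) := by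
      have h2 : Integrable (fun p : ℝ × ℝ => p.1) (γs.prod γe) := by
        have := (integrable_id_gaussianReal a ha).mul_prod (g := fun _ : ℝ => (1:ℝ))
          (integrable_const 1) (μ := γs) (ν := γe)
        simpa using this
      exact h2.indicator hB
    rw [h1, integral_prod_symm _ hint]
    have h3 : ∀ y : ℝ, (∫ x, B.indicator (fun p : ℝ × ℝ => p.1) (x, y) ∂γs)
        = a * gpdf a (τ₁ - y) := by
      intro y
      have h4 : ∀ x : ℝ, B.indicator (fun p : ℝ × ℝ => p.1) (x, y)
          = (Set.Ici (τ₁ - y)).indicator (fun x => x) x := by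
        intro x
        simp only [Set.indicator_apply, hB_def, Set.mem_setOf_eq, Set.mem_Ici, sub_le_iff_le_add]
      simp_rw [h4]
      rw [integral_gaussianReal a ha]
      have h5 : ∀ x : ℝ, gpdf a x * (Set.Ici (τ₁ - y)).indicator (fun x => x) x
          = (Set.Ici (τ₁ - y)).indicator (fun x => x * gpdf a x) x := by
        intro x
        by_cases hx : x ∈ Set.Ici (τ₁ - y)
        · simp [hx, mul_comm]
        · simp [hx]
      simp_rw [h5]
      rw [integral_indicator measurableSet_Ici, tail_gpdf a _ ha]
    rw [integral_congr_ae (Filter.Eventually.of_forall h3), integral_const_mul,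
      conv_gaussianReal a b τ₁ ha hb]
  -- denominator
  have hD : (μ A).toReal = stdCcdf (τ₁ / Real.sqrt (a + b)) := by
    have h1 : μ A = (γs.prod γe) B := by
      rw [hpre, ← hmap, Measure.map_apply (hs.prodMk he) hB]
    have h2 : ((γs.prod γe) B).toReal = ∫ p, B.indicator (fun _ => (1:ℝ)) p ∂(γs.prod γe) :=
      (integral_indicator_one hB).symm
    have hint : Integrable (fun p : ℝ × ℝ => B.indicator (fun _ => (1:ℝ)) p) (γs.prod γe) :=
      (integrable_const 1).indicator hB
    rw [h1, h2, integral_prod_symm _ hint]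
    have h3 : ∀ y : ℝ, (∫ x, B.indicator (fun _ => (1:ℝ)) (x, y) ∂γs)
        = ∫ x in Set.Ici (τ₁ - y), gpdf a x := by
      intro y
      have h4 : ∀ x : ℝ, B.indicator (fun _ => (1:ℝ)) (x, y)
          = (Set.Ici (τ₁ - y)).indicator (1 : ℝ → ℝ) x := by
        intro x
        simp only [Set.indicator_apply, hB_def, Set.mem_setOf_eq, Set.mem_Ici, sub_le_iff_le_add,
          Pi.one_apply]
      simp_rw [h4]
      rw [integral_indicator_one measurableSet_Ici, measureReal_def, hγs,
        gaussianReal_apply_eq_integral 0 (ne_of_gt (Real.toNNReal_pos.mpr ha)) _,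
        gpdf_eq a ha, ENNReal.toReal_ofReal
          (setIntegral_nonneg measurableSet_Ici fun x _ => gpdf_nonneg a x)]
    rw [integral_congr_ae (Filter.Eventually.of_forall h3), ccdf_conv a b τ₁ ha hb,
      integral_Ici_gpdf _ _ hv]
  -- split the numerator
  have hsplit : ∫ ω in A, (α * f ω + (1 - α) * s ω) ∂μ
      = α * (∫ ω in A, f ω ∂μ) + (1 - α) * (∫ ω in A, s ω ∂μ) := by
    rw [integral_add ((hfint.restrict).const_mul α) ((hsint.restrict).const_mul (1 - α)),
      integral_const_mul, integral_const_mul]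
  -- finish
  rw [condMean, hsplit, hNf, hNs, hD, mul_zero, zero_add, hazard]
  rw [gpdf_scale _ _ hv]
  have hC := stdCcdf_pos (τ₁ / Real.sqrt (a + b))
  field_simp
end

section
/- For fixed τ₁ ∈ ℝ, the map α ↦ E[α·f + (1−α)·s | s̃ ≥ τ₁] is strictly monotonically decreasing in α on (0,1). -/
open MeasureTheory ProbabilityTheory Real

open Filter Set
open scoped NNReal ENNReal Topology

namespace DelegAux

lemma gaussPos {v : ℝ≥0} (hv : v ≠ 0) (m : ℝ) {t : Set ℝ}
    (ht : volume t ≠ 0) : 0 < gaussianReal m v t := by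
  rw [pos_iff_ne_zero]
  exact fun h => ht (gaussianReal_absolutelyContinuous' m hv h)

lemma hasDeriv_negv_pdf (v : ℝ≥0) (hv : v ≠ 0) (x : ℝ) :
    HasDerivAt (fun y : ℝ => -(v : ℝ) * gaussianPDFReal 0 v y)
      (x * gaussianPDFReal 0 v x) x := by
  have hv' : (0 : ℝ) < v := lt_of_le_of_ne v.coe_nonneg (by exact_mod_cast hv.symm)
  simp only [gaussianPDFReal, sub_zero]
  have h1 : HasDerivAt (fun y : ℝ => -(y ^ 2) / (2 * (v : ℝ))) (-(2 * x) / (2 * v)) x := by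
    simpa using ((hasDerivAt_pow 2 x).neg).div_const (2 * (v : ℝ))
  have h2 := (h1.exp.const_mul ((Real.sqrt (2 * π * v))⁻¹)).const_mul (-(v : ℝ))
  refine h2.congr_deriv ?_
  field_simp

lemma tendsto_negv_pdf_atTop (v : ℝ≥0) (hv : v ≠ 0) :
    Tendsto (fun y : ℝ => -(v : ℝ) * gaussianPDFReal 0 v y) atTop (𝓝 0) := by
  have hv' : (0 : ℝ) < v := lt_of_le_of_ne v.coe_nonneg (by exact_mod_cast hv.symm)
  have h1 : Tendsto (fun y : ℝ => y ^ 2 / (2 * (v : ℝ))) atTop atTop :=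
    (tendsto_pow_atTop two_ne_zero).atTop_div_const (by positivity)
  have h0 : Tendsto (fun y : ℝ => -(y ^ 2) / (2 * (v : ℝ))) atTop atBot :=
    (tendsto_neg_atTop_atBot.comp h1).congr fun y => (neg_div _ _).symm
  have h2 := Real.tendsto_exp_atBot.comp h0
  have h3 := (h2.const_mul ((Real.sqrt (2 * π * v))⁻¹)).const_mul (-(v : ℝ))
  simpa [gaussianPDFReal, Function.comp] using h3

lemma tendsto_negv_pdf_atBot (v : ℝ≥0) (hv : v ≠ 0) :
    Tendsto (fun y : ℝ => -(v : ℝ) * gaussianPDFReal 0 v y) atBot (𝓝 0) := by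
  have hv' : (0 : ℝ) < v := lt_of_le_of_ne v.coe_nonneg (by exact_mod_cast hv.symm)
  have h1 : Tendsto (fun y : ℝ => y ^ 2 / (2 * (v : ℝ))) atBot atTop := by
    have h1' := (((tendsto_pow_atTop two_ne_zero).atTop_div_const
      (show (0:ℝ) < 2 * v by positivity)).comp tendsto_neg_atBot_atTop)
    exact h1'.congr fun y => by simp [Function.comp, neg_sq]
  have h0 : Tendsto (fun y : ℝ => -(y ^ 2) / (2 * (v : ℝ))) atBot atBot :=
    (tendsto_neg_atTop_atBot.comp h1).congr fun y => (neg_div _ _).symm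
  have h2 := Real.tendsto_exp_atBot.comp h0
  have h3 := (h2.const_mul ((Real.sqrt (2 * π * v))⁻¹)).const_mul (-(v : ℝ))
  simpa [gaussianPDFReal, Function.comp] using h3

lemma integrable_mul_pdf (v : ℝ≥0) (hv : v ≠ 0) :
    Integrable (fun y : ℝ => y * gaussianPDFReal 0 v y) := by
  have hv' : (0 : ℝ) < v := lt_of_le_of_ne v.coe_nonneg (by exact_mod_cast hv.symm)
  have h := (integrable_mul_exp_neg_mul_sq
    (show (0:ℝ) < (2 * (v:ℝ))⁻¹ by positivity)).const_mul ((Real.sqrt (2 * π * v))⁻¹)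
  refine h.congr ?_
  filter_upwards with y
  simp only [gaussianPDFReal, sub_zero]
  rw [show -(2 * (v:ℝ))⁻¹ * y ^ 2 = -(y^2) / (2*(v:ℝ)) by field_simp]
  ring

lemma integral_Ioi_mul_pdf (v : ℝ≥0) (hv : v ≠ 0) (c : ℝ) :
    ∫ y in Ioi c, y * gaussianPDFReal 0 v y = (v : ℝ) * gaussianPDFReal 0 v c := by
  have := integral_Ioi_of_hasDerivAt_of_tendsto'
    (f := fun y : ℝ => -(v : ℝ) * gaussianPDFReal 0 v y) (a := c)
    (fun x _ => hasDeriv_negv_pdf v hv x)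
    ((integrable_mul_pdf v hv).integrableOn)
    (tendsto_negv_pdf_atTop v hv)
  rw [this]; ring

lemma integral_Iic_mul_pdf (v : ℝ≥0) (hv : v ≠ 0) (c : ℝ) :
    ∫ y in Iic c, y * gaussianPDFReal 0 v y = -((v : ℝ) * gaussianPDFReal 0 v c) := by
  have := integral_Iic_of_hasDerivAt_of_tendsto'
    (f := fun y : ℝ => -(v : ℝ) * gaussianPDFReal 0 v y) (a := c)
    (fun x _ => hasDeriv_negv_pdf v hv x)
    ((integrable_mul_pdf v hv).integrableOn)
    (tendsto_negv_pdf_atBot v hv)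
  rw [this]; ring

lemma integral_gauss_eq_pdf_integral (v : ℝ≥0) (hv : v ≠ 0) {t : Set ℝ}
    (ht : MeasurableSet t) :
    ∫ x in t, x ∂(gaussianReal 0 v) = ∫ x in t, x * gaussianPDFReal 0 v x := by
  rw [gaussianReal_of_var_ne_zero _ hv]
  have hpdf : (gaussianPDF 0 v) = fun x => ((gaussianPDFReal 0 v x).toNNReal : ℝ≥0∞) := rfl
  rw [hpdf, restrict_withDensity ht _,
    integral_withDensity_eq_integral_smul
      ((measurable_gaussianPDFReal 0 v).real_toNNReal)]
  refine setIntegral_congr_fun ht fun x _ => ?_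
  simp [NNReal.smul_def, Real.coe_toNNReal _ (gaussianPDFReal_nonneg 0 v x)]
  ring

lemma setIntegral_id_Ici_pos (v : ℝ≥0) (hv : v ≠ 0) (c : ℝ) :
    0 < ∫ x in Ici c, x ∂(gaussianReal 0 v) := by
  have hv' : (0 : ℝ) < v := lt_of_le_of_ne v.coe_nonneg (by exact_mod_cast hv.symm)
  rw [integral_gauss_eq_pdf_integral v hv measurableSet_Ici,
    integral_Ici_eq_integral_Ioi, integral_Ioi_mul_pdf v hv c]
  exact mul_pos hv' (gaussianPDFReal_pos 0 v c hv)

lemma integral_id_gauss (v : ℝ≥0) (hv : v ≠ 0) :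
    ∫ x, x ∂(gaussianReal 0 v) = 0 := by
  have h1 : ∫ x, x ∂(gaussianReal 0 v) = ∫ x, x * gaussianPDFReal 0 v x := by
    have := integral_gauss_eq_pdf_integral v hv MeasurableSet.univ
    simpa [Measure.restrict_univ] using this
  rw [h1, ← integral_add_compl (measurableSet_Iic (a := (0:ℝ))) (integrable_mul_pdf v hv),
    compl_Iic, integral_Iic_mul_pdf v hv 0, integral_Ioi_mul_pdf v hv 0]
  ring

lemma integrable_id_gauss (v : ℝ≥0) (hv : v ≠ 0) :
    Integrable (fun x : ℝ => x) (gaussianReal 0 v) := by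
  rw [gaussianReal_of_var_ne_zero _ hv]
  rw [integrable_withDensity_iff (measurable_gaussianPDF 0 v)
    (ae_of_all _ fun x => ENNReal.ofReal_lt_top)]
  refine (integrable_mul_pdf v hv).congr ?_
  filter_upwards with x
  simp [gaussianPDF, ENNReal.toReal_ofReal (gaussianPDFReal_nonneg 0 v x)]

end DelegAux

/-- For fixed threshold `τ₁`, the principal's expected utility per applicant selected by the
agent, `α ↦ E[α·f + (1-α)·s | s̃ ≥ τ₁]`, is strictly decreasing in `α` on `(0,1)`. -/
theorem delegated_utility_strictAnti_in_alpha
    {Ω : Type*} [MeasurableSpace Ω] (μ : Measure Ω) [IsProbabilityMeasure μ]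
    (f s e : Ω → ℝ) (hf : Measurable f) (hs : Measurable s) (he : Measurable e)
    (σf σs σe τ₁ : ℝ) (hσf : 0 < σf) (hσs : 0 < σs) (hσe : 0 ≤ σe)
    (hindep : iIndepFun ![f, s, e] μ)
    (hfd : μ.map f = gaussianReal 0 ((σf ^ 2).toNNReal))
    (hsd : μ.map s = gaussianReal 0 ((σs ^ 2).toNNReal))
    (hed : μ.map e = gaussianReal 0 ((σe ^ 2).toNNReal)) :
    StrictAntiOn (fun α : ℝ =>
      condMean μ (fun ω => α * f ω + (1 - α) * s ω) {ω | τ₁ ≤ s ω + e ω})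
      (Set.Ioo (0 : ℝ) 1) := by
  classical
  set A : Set Ω := {ω | τ₁ ≤ s ω + e ω} with hAdef
  have hA : MeasurableSet A := measurableSet_le measurable_const (hs.add he)
  set vf : ℝ≥0 := (σf ^ 2).toNNReal
  set vs : ℝ≥0 := (σs ^ 2).toNNReal
  set ve : ℝ≥0 := (σe ^ 2).toNNReal
  have hvf : vf ≠ 0 := by
    simp only [vf, ne_eq, Real.toNNReal_eq_zero, not_le]
    positivity
  have hvs : vs ≠ 0 := by
    simp only [vs, ne_eq, Real.toNNReal_eq_zero, not_le]
    positivity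
  have hm : ∀ i, Measurable (![f, s, e] i) := by
    intro i; fin_cases i <;> assumption
  -- integrability of f and s
  have hf_int : Integrable f μ := by
    have := DelegAux.integrable_id_gauss vf hvf
    rw [← hfd] at this
    exact (integrable_map_measure aestronglyMeasurable_id hf.aemeasurable).mp this
  have hs_int : Integrable s μ := by
    have := DelegAux.integrable_id_gauss vs hvs
    rw [← hsd] at this
    exact (integrable_map_measure aestronglyMeasurable_id hs.aemeasurable).mp this
  -- positivity of μ A
  have hPpos : 0 < μ A := by
    have hse : IndepFun s e μ := hindep.indepFun (show (1 : Fin 3) ≠ 2 by decide)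
    have hsub : s ⁻¹' (Ici τ₁) ∩ e ⁻¹' (Ici 0) ⊆ A := by
      intro ω hω
      have h1 : τ₁ ≤ s ω := hω.1
      have h2 : (0:ℝ) ≤ e ω := hω.2
      simp only [A, mem_setOf_eq]
      linarith
    have hmul : μ (s ⁻¹' (Ici τ₁) ∩ e ⁻¹' (Ici 0))
        = μ (s ⁻¹' (Ici τ₁)) * μ (e ⁻¹' (Ici 0)) :=
      hse.measure_inter_preimage_eq_mul _ _ measurableSet_Ici measurableSet_Ici
    have hs_pos : 0 < μ (s ⁻¹' (Ici τ₁)) := by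
      rw [← Measure.map_apply hs measurableSet_Ici, hsd]
      exact DelegAux.gaussPos hvs 0 (by simp)
    have he_pos : 0 < μ (e ⁻¹' (Ici 0)) := by
      rw [← Measure.map_apply he measurableSet_Ici, hed]
      by_cases hve : ve = 0
      · rw [hve, gaussianReal_zero_var]
        simp [Measure.dirac_apply' _ measurableSet_Ici]
      · exact DelegAux.gaussPos hve 0 (by simp)
    calc (0 : ℝ≥0∞) < μ (s ⁻¹' (Ici τ₁)) * μ (e ⁻¹' (Ici 0)) :=
          ENNReal.mul_pos hs_pos.ne' he_pos.ne'
      _ = μ (s ⁻¹' (Ici τ₁) ∩ e ⁻¹' (Ici 0)) := hmul.symm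
      _ ≤ μ A := measure_mono hsub
  have hP : 0 < (μ A).toReal := ENNReal.toReal_pos hPpos.ne' (measure_ne_top μ A)
  -- the f-part integrates to zero
  have hI1 : ∫ ω in A, f ω ∂μ = 0 := by
    have hpair : IndepFun (fun ω => (s ω, e ω)) f μ :=
      hindep.indepFun_prodMk hm 1 2 0 (by decide) (by decide)
    set ψ : ℝ × ℝ → ℝ := fun p => (Ici τ₁).indicator (fun _ => (1:ℝ)) (p.1 + p.2) with hψ
    have hψm : Measurable ψ :=
      (measurable_const.indicator measurableSet_Ici).comp (measurable_fst.add measurable_snd)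
    have hind : IndepFun f (fun ω => ψ (s ω, e ω)) μ :=
      (hpair.comp hψm measurable_id).symm
    have hrw : ∫ ω in A, f ω ∂μ = ∫ ω, f ω * ψ (s ω, e ω) ∂μ := by
      rw [← integral_indicator hA]
      refine integral_congr_ae (ae_of_all _ fun ω => ?_)
      by_cases hω : ω ∈ A
      · have h1 : τ₁ ≤ s ω + e ω := hω
        rw [Set.indicator_of_mem hω]
        simp only [ψ]
        rw [Set.indicator_of_mem (show s ω + e ω ∈ Ici τ₁ from h1), mul_one]
      · have h1 : ¬ τ₁ ≤ s ω + e ω := hω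
        rw [Set.indicator_of_notMem hω]
        simp only [ψ]
        rw [Set.indicator_of_notMem (show s ω + e ω ∉ Ici τ₁ from h1), mul_zero]
    have hmeas2 : AEStronglyMeasurable (fun ω => ψ (s ω, e ω)) μ :=
      (hψm.comp (hs.prodMk he)).aestronglyMeasurable
    have hmul := hind.integral_mul_eq_mul_integral hf.aestronglyMeasurable hmeas2
    have hEf : ∫ ω, f ω ∂μ = 0 := by
      have : ∫ x, x ∂(μ.map f) = ∫ ω, f ω ∂μ :=
        integral_map hf.aemeasurable aestronglyMeasurable_id
      rw [← this, hfd]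
      exact DelegAux.integral_id_gauss vf hvf
    have : (fun ω => f ω * ψ (s ω, e ω)) = f * (fun ω => ψ (s ω, e ω)) := rfl
    rw [hrw, this, hmul, hEf, zero_mul]
  -- the s-part is positive
  have hI2 : 0 < ∫ ω in A, s ω ∂μ := by
    have hes : IndepFun e s μ := hindep.indepFun (show (2 : Fin 3) ≠ 1 by decide)
    have hmap : μ.map (fun ω => (e ω, s ω))
        = (μ.map e).prod (μ.map s) :=
      (indepFun_iff_map_prod_eq_prod_map_map he.aemeasurable hs.aemeasurable).mp hes
    set B : Set (ℝ × ℝ) := {p | τ₁ ≤ p.2 + p.1} with hB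
    have hBm : MeasurableSet B := measurableSet_le measurable_const
      (measurable_snd.add measurable_fst)
    set F : ℝ × ℝ → ℝ := B.indicator (fun p => p.2) with hF
    have hFm : Measurable F := measurable_snd.indicator hBm
    have hstep1 : ∫ ω in A, s ω ∂μ = ∫ p, F p ∂((μ.map e).prod (μ.map s)) := by
      rw [← hmap, integral_map (he.aemeasurable.prodMk hs.aemeasurable)
        hFm.aestronglyMeasurable, ← integral_indicator hA]
      refine integral_congr_ae (ae_of_all _ fun ω => ?_)
      by_cases hω : ω ∈ A
      · have hωB : (e ω, s ω) ∈ B := hω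
        simp [Set.indicator_of_mem hω, F, Set.indicator_of_mem hωB]
      · have hωB : (e ω, s ω) ∉ B := hω
        simp [Set.indicator_of_notMem hω, F, Set.indicator_of_notMem hωB]
    rw [hsd, hed] at hstep1
    -- integrability of F on the product
    have hid_int : Integrable (fun x : ℝ => x) (gaussianReal 0 vs) :=
      DelegAux.integrable_id_gauss vs hvs
    have habs : Integrable (fun p : ℝ × ℝ => |p.2|)
        ((gaussianReal 0 ve).prod (gaussianReal 0 vs)) := by
      refine (integrable_prod_iff (measurable_snd.abs.aestronglyMeasurable)).2 ⟨?_, ?_⟩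
      · exact ae_of_all _ fun y => hid_int.abs
      · simp only [Real.norm_eq_abs, abs_abs]
        exact integrable_const _
    have hFint : Integrable F ((gaussianReal 0 ve).prod (gaussianReal 0 vs)) := by
      refine habs.mono' hFm.aestronglyMeasurable (ae_of_all _ fun p => ?_)
      simpa using norm_indicator_le_norm_self (s := B) (fun p : ℝ × ℝ => p.2) p
    have hinner : ∀ y : ℝ, (∫ x, F (y, x) ∂(gaussianReal 0 vs))
        = ∫ x in Ici (τ₁ - y), x ∂(gaussianReal 0 vs) := by
      intro y
      rw [← integral_indicator measurableSet_Ici]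
      refine integral_congr_ae (ae_of_all _ fun x => ?_)
      have : (y, x) ∈ B ↔ x ∈ Ici (τ₁ - y) := by
        simp only [B, mem_setOf_eq, mem_Ici, sub_le_iff_le_add]
      by_cases hx : x ∈ Ici (τ₁ - y)
      · simp [F, Set.indicator_of_mem hx, Set.indicator_of_mem (this.mpr hx)]
      · simp [F, Set.indicator_of_notMem hx,
          Set.indicator_of_notMem (fun h => hx (this.mp h))]
    rw [hstep1, integral_prod F hFint]
    have hpos : ∀ y : ℝ, 0 < ∫ x, F (y, x) ∂(gaussianReal 0 vs) := fun y => by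
      rw [hinner y]; exact DelegAux.setIntegral_id_Ici_pos vs hvs _
    have hint_out : Integrable (fun y => ∫ x, F (y, x) ∂(gaussianReal 0 vs))
        (gaussianReal 0 ve) := hFint.integral_prod_left
    rw [integral_pos_iff_support_of_nonneg_ae (ae_of_all _ fun y => (hpos y).le) hint_out]
    have : Function.support (fun y => ∫ x, F (y, x) ∂(gaussianReal 0 vs)) = univ := by
      ext y; simp [Function.mem_support, (hpos y).ne']
    rw [this]
    simp
  -- assemble
  have hval : ∀ α : ℝ,
      condMean μ (fun ω => α * f ω + (1 - α) * s ω) A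
        = (1 - α) * ((∫ ω in A, s ω ∂μ) / (μ A).toReal) := by
    intro α
    unfold condMean
    rw [integral_add ((hf_int.restrict).const_mul α) ((hs_int.restrict).const_mul (1 - α)),
      integral_const_mul, integral_const_mul, hI1, mul_zero, zero_add, mul_div_assoc]
  intro a _ b _ hab
  simp only [← hAdef, hval]
  have hC : 0 < (∫ ω in A, s ω ∂μ) / (μ A).toReal := div_pos hI2 hP
  have : (1 : ℝ) - b < 1 - a := by linarith
  exact mul_lt_mul_of_pos_right this hC
end
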